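/- Let X and Y be finite nonempty types, ρ a probability mass function on X with ρ(x) > 0 for all x, and for each x let π_ref(·|x) and μ(·|x) be probability mass functions on Y with π_ref(y|x) > 0 and μ(y|x) > 0 for all y; let r : X × Y → ℝ, τ > 0, and V : X → ℝ. Suppose π_V is a conditional policy with π_V(y|x) > 0 for all x, y that minimises π ↦ L(π, V) over all conditional policies π with π(y|x) > 0 for all x, y. Then for every x and y, τ·log(π_V(y|x)/π_ref(y|x)) = r(x,y) − V(x) − (π_V(y|x)/μ(y|x))·(V^{π_V}(x) − V(x)), where V^{π_V}(x) = Σ_y μ(y|x)·(r(x,y) − τ·log(π_V(y|x)/π_ref(y|x))). -/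

import Mathlib

/-- The DRO loss of a conditional policy `π` and a value function `V`. -/
noncomputable def droLoss {X Y : Type*} [Fintype X] [Fintype Y]
    (ρ : X → ℝ) (μ πref : X → Y → ℝ) (r : X → Y → ℝ) (τ : ℝ)
    (π : X → Y → ℝ) (V : X → ℝ) : ℝ :=
  (1 / 2) * ∑ x, ρ x *
    ∑ y, μ x y * (r x y - V x - τ * Real.log (π x y / πref x y)) ^ 2

theorem dro_stmt_8 {X Y : Type*} [Fintype X] [Fintype Y] [Nonempty X] [Nonempty Y]
    (ρ : X → ℝ) (hρpos : ∀ x, 0 < ρ x) (hρ1 : ∑ x, ρ x = 1)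
    (πref : X → Y → ℝ) (hrefpos : ∀ x y, 0 < πref x y) (href1 : ∀ x, ∑ y, πref x y = 1)
    (μ : X → Y → ℝ) (hμpos : ∀ x y, 0 < μ x y) (hμ1 : ∀ x, ∑ y, μ x y = 1)
    (r : X → Y → ℝ) (τ : ℝ) (hτ : 0 < τ)
    (V : X → ℝ)
    (πV : X → Y → ℝ) (hπVpos : ∀ x y, 0 < πV x y) (hπV1 : ∀ x, ∑ y, πV x y = 1)
    (hmin : ∀ π : X → Y → ℝ, (∀ x y, 0 < π x y) → (∀ x, ∑ y, π x y = 1) →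
      droLoss ρ μ πref r τ πV V ≤ droLoss ρ μ πref r τ π V)
    (VπV : X → ℝ)
    (hVπV : ∀ x, VπV x = ∑ y, μ x y * (r x y - τ * Real.log (πV x y / πref x y))) :
    ∀ x y, τ * Real.log (πV x y / πref x y) =
      r x y - V x - (πV x y / μ x y) * (VπV x - V x) := by
  classical
  set g : X → Y → ℝ := fun x y => r x y - V x - τ * Real.log (πV x y / πref x y) with hgdef
  have key : ∀ x₀ y₁ y₂, μ x₀ y₁ * g x₀ y₁ / πV x₀ y₁ = μ x₀ y₂ * g x₀ y₂ / πV x₀ y₂ := by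
    intro x₀ y₁ y₂
    by_cases hyy : y₁ = y₂
    · rw [hyy]
    set d : X → Y → ℝ := fun x y =>
      if x = x₀ then (if y = y₁ then 1 else if y = y₂ then -1 else 0) else 0 with hddef
    have hd0 : ∀ x, x ≠ x₀ → ∀ y, d x y = 0 := by intro x hx y; simp [hddef, hx]
    have hdy1 : d x₀ y₁ = 1 := by simp [hddef]
    have hdy2 : d x₀ y₂ = -1 := by
      simp [hddef, Ne.symm hyy]
    have hsplit : ∀ y, d x₀ y = (if y = y₁ then (1:ℝ) else 0) - (if y = y₂ then (1:ℝ) else 0) := by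
      intro y
      by_cases h1 : y = y₁
      · subst h1; simp [hddef, hyy]
      · by_cases h2 : y = y₂
        · subst h2; simp [hddef, h1]
        · simp [hddef, h1, h2]
    set f : ℝ → ℝ := fun t => (1/2) * ∑ x, ρ x *
      ∑ y, μ x y * (r x y - V x - τ * Real.log ((πV x y + t * d x y) / πref x y)) ^ 2 with hfdef
    have hεpos : 0 < min (πV x₀ y₁) (πV x₀ y₂) := lt_min (hπVpos x₀ y₁) (hπVpos x₀ y₂)
    have hlocal : IsLocalMin f 0 := by
      filter_upwards [Metric.ball_mem_nhds (0:ℝ) hεpos] with t ht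
      have habs : |t| < min (πV x₀ y₁) (πV x₀ y₂) := by simpa using ht
      have ht1 := abs_lt.mp habs
      have hm1 : min (πV x₀ y₁) (πV x₀ y₂) ≤ πV x₀ y₁ := min_le_left _ _
      have hm2 : min (πV x₀ y₁) (πV x₀ y₂) ≤ πV x₀ y₂ := min_le_right _ _
      have hpos : ∀ x y, 0 < πV x y + t * d x y := by
        intro x y
        by_cases hx : x = x₀
        · rw [hx]
          by_cases h1 : y = y₁
          · subst h1; rw [hdy1]; nlinarith [ht1.1, ht1.2]
          · by_cases h2 : y = y₂
            · subst h2; rw [hdy2]; nlinarith [ht1.1, ht1.2]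
            · have : d x₀ y = 0 := by simp [hddef, h1, h2]
              rw [this]; simpa using hπVpos x₀ y
        · rw [hd0 x hx]; simpa using hπVpos x y
      have hsum : ∀ x, ∑ y, (πV x y + t * d x y) = 1 := by
        intro x
        rw [Finset.sum_add_distrib, hπV1]
        by_cases hx : x = x₀
        · rw [hx]
          have : ∑ y, t * d x₀ y = 0 := by
            rw [← Finset.mul_sum]
            have : ∑ y, d x₀ y = 0 := by
              simp only [hsplit]
              rw [Finset.sum_sub_distrib]
              simp [Finset.sum_ite_eq']
            rw [this, mul_zero]
          rw [this]
          rw [hx] at *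
          exact add_zero 1
        · have : ∑ y, t * d x y = 0 := by
            simp [hd0 x hx]
          rw [this, add_zero]
      have h := hmin (fun x y => πV x y + t * d x y) hpos hsum
      have e0 : f 0 = droLoss ρ μ πref r τ πV V := by simp [hfdef, droLoss]
      have et : f t = droLoss ρ μ πref r τ (fun x y => πV x y + t * d x y) V := by
        simp [hfdef, droLoss]
      rw [e0, et]; exact h
    have hterm : ∀ x y, HasDerivAt
        (fun t => μ x y * (r x y - V x - τ * Real.log ((πV x y + t * d x y) / πref x y)) ^ 2)
        ((-2*τ) * (μ x y * g x y / πV x y) * d x y) 0 := by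
      intro x y
      have hp := hπVpos x y
      have hq := hrefpos x y
      have h1 : HasDerivAt (fun t : ℝ => (πV x y + t * d x y) / πref x y)
          (d x y / πref x y) 0 :=
        ((hasDerivAt_mul_const (d x y)).const_add (πV x y)).div_const (πref x y)
      have h2 := (h1.log (by simp only [zero_mul, add_zero]; positivity)).const_mul τ
      have h3 := (h2.const_sub (r x y - V x)).fun_pow 2
      have h4 := h3.const_mul (μ x y)
      convert h4 using 1
      · rfl
      · rfl
      simp only [zero_mul, add_zero, hgdef]
      norm_num
      field_simp
    have hderiv : HasDerivAt f
        ((1/2) * ∑ x, ρ x * ∑ y, (-2*τ) * (μ x y * g x y / πV x y) * d x y) 0 :=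
      HasDerivAt.const_mul (1/2)
        (HasDerivAt.fun_sum fun x _ =>
          (HasDerivAt.fun_sum fun y _ => hterm x y).const_mul (ρ x))
    have hzero := hlocal.hasDerivAt_eq_zero hderiv
    have hval : (1/2) * ∑ x, ρ x * ∑ y, (-2*τ) * (μ x y * g x y / πV x y) * d x y
        = (-τ) * (ρ x₀ * (μ x₀ y₁ * g x₀ y₁ / πV x₀ y₁ - μ x₀ y₂ * g x₀ y₂ / πV x₀ y₂)) := by
      rw [Finset.sum_eq_single x₀]
      · have : ∑ y, (-2*τ) * (μ x₀ y * g x₀ y / πV x₀ y) * d x₀ y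
            = (-2*τ) * (μ x₀ y₁ * g x₀ y₁ / πV x₀ y₁)
              - (-2*τ) * (μ x₀ y₂ * g x₀ y₂ / πV x₀ y₂) := by
          simp only [hsplit, mul_sub, mul_ite, mul_one, mul_zero]
          rw [Finset.sum_sub_distrib]
          simp [Finset.sum_ite_eq']
        rw [this]; ring
      · intro x _ hx; simp [hd0 x hx]
      · intro h; exact absurd (Finset.mem_univ x₀) h
    rw [hval] at hzero
    have hρne : ρ x₀ ≠ 0 := ne_of_gt (hρpos x₀)
    have hτne : τ ≠ 0 := ne_of_gt hτ
    have : μ x₀ y₁ * g x₀ y₁ / πV x₀ y₁ - μ x₀ y₂ * g x₀ y₂ / πV x₀ y₂ = 0 := by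
      rcases mul_eq_zero.mp hzero with h | h
      · exact absurd h (by simpa using hτne)
      · rcases mul_eq_zero.mp h with h' | h'
        · exact absurd h' hρne
        · exact h'
    linarith
  intro x y
  have hsumg : ∑ y', μ x y' * g x y' = VπV x - V x := by
    have hrw : ∀ y', μ x y' * g x y'
        = μ x y' * (r x y' - τ * Real.log (πV x y' / πref x y')) - μ x y' * V x := by
      intro y'; simp only [hgdef]; ring
    simp_rw [hrw]
    rw [Finset.sum_sub_distrib, ← Finset.sum_mul, hμ1, one_mul, hVπV]
  set k := μ x y * g x y / πV x y with hk
  have hky : ∀ y', μ x y' * g x y' = k * πV x y' := by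
    intro y'
    have h := key x y' y
    rw [← hk] at h
    exact (div_eq_iff (ne_of_gt (hπVpos x y'))).mp h
  have hkval : k = VπV x - V x := by
    have hs : ∑ y', μ x y' * g x y' = ∑ y', k * πV x y' :=
      Finset.sum_congr rfl fun y' _ => hky y'
    rw [hsumg, ← Finset.mul_sum, hπV1, mul_one] at hs
    exact hs.symm
  have hgy := hky y
  rw [hkval] at hgy
  have hμne : μ x y ≠ 0 := ne_of_gt (hμpos x y)
  have hgexp : g x y = r x y - V x - τ * Real.log (πV x y / πref x y) := rfl
  have hgval : g x y * μ x y = πV x y * (VπV x - V x) := by linarith [hgy]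
  have hgval2 : g x y = πV x y / μ x y * (VπV x - V x) := by
    rw [div_mul_eq_mul_div, eq_div_iff hμne]; exact hgval
  rw [hgexp] at hgval2
  linarith [hgval2]
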